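/- arXiv:2001.07905 — 2 statements merged into one kernel-verified Lean document; each statement's English description precedes it below -/
import Mathlib

section
/- Let τ < ν be real numbers, z ∈ ℝ^n, and c_*, β, θ, α_φ > 0. Set Ω^β = {(t,x) ∈ [τ,ν] × ℝ^n : ‖x − z‖ ≤ (t−τ) c_* + β} and ∂Ω^β = {(t,x) ∈ Ω^β : ‖x − z‖ = (t−τ) c_* + β}. Then there exists a continuously differentiable function η : ℝ × ℝ^n → ℝ such that: η(τ,z) = 0; η(t,x) ≥ 0 for all (t,x) ∈ Ω^β; η(t,x) ≥ 2 α_φ + 4 (ν−τ) θ for all (t,x) ∈ ∂Ω^β; and ‖∇_x η(t,x)‖ ≤ −(1/c_*) ∂η(t,x)/∂t for all (t,x) ∈ Ω^β. Moreover, there exists λ_η > 0 such that |η(t,x) − η(t,x′)| ≤ λ_η ‖x − x′‖ for all (t,x), (t,x′) ∈ Ω^β. -/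
noncomputable section

open MeasureTheory Set Filter Topology Asymptotics RealInnerProductSpace
open scoped NNReal

namespace DGPaper

abbrev E (n : ℕ) : Type := EuclideanSpace ℝ (Fin n)

variable {n l m : ℕ}

/-- `x` is piecewise continuous on `[a,b)` (equivalently `[a,b]`, the value at `b` being free):
there is a finite partition `a = ξ₀ < ξ₁ < … = b` such that `x` is continuous on each
`[ξ i, ξ (i+1))` and has a finite left limit at each `ξ (i+1)`. -/
def PCOn (x : ℝ → E n) (a b : ℝ) : Prop :=
  ∃ k : ℕ, ∃ ξ : Fin (k + 2) → ℝ, StrictMono ξ ∧ ξ 0 = a ∧ ξ (Fin.last (k + 1)) = b ∧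
    ∀ i : Fin (k + 1), ContinuousOn x (Ico (ξ i.castSucc) (ξ i.succ)) ∧
      ∃ L : E n, Tendsto x (𝓝[<] ξ i.succ) (𝓝 L)

/-- membership in the space `PC = PC([-h,0), ℝⁿ)`. -/
def PCh (h : ℝ) (w : ℝ → E n) : Prop := PCOn w (-h) 0

/-- `‖w‖₁ = ∫_{-h}^0 ‖w ξ‖ dξ`. -/
def norm1 (h : ℝ) (w : ℝ → E n) : ℝ := ∫ ξ in (-h)..(0:ℝ), ‖w ξ‖

/-- `‖w‖_∞ = sup_{ξ ∈ [-h,0)} ‖w ξ‖`. -/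
def normInf (h : ℝ) (w : ℝ → E n) : ℝ := sSup ((fun ξ => ‖w ξ‖) '' Ico (-h) (0 : ℝ))

/-- `(z, w) ∈ P(α)`. -/
def memP (h α : ℝ) (z : E n) (w : ℝ → E n) : Prop := PCh h w ∧ ‖z‖ ≤ α ∧ normInf h w ≤ α

/-- the history segment `x_t(ξ) = x (t + ξ)`. -/
def seg (x : ℝ → E n) (t : ℝ) : ℝ → E n := fun ξ => x (t + ξ)

/-- the constant right extension `κ(·)` of `(τ, z, w)`, i.e. the unique element of
`Λ₀(τ,z,w(·))`. -/
def ext0 (τ : ℝ) (z : E n) (w : ℝ → E n) : ℝ → E n := fun t => if t < τ then w (t - τ) else z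

/-- the set `Λ(τ,z,w(·))` of Lipschitz right extensions. -/
def Lam (ϑ h τ : ℝ) (z : E n) (w : ℝ → E n) : Set (ℝ → E n) :=
  {x | PCOn x (τ - h) ϑ ∧ x τ = z ∧ (∀ t ∈ Ico (τ - h) τ, x t = w (t - τ)) ∧
    ∃ K : ℝ≥0, LipschitzOnWith K x (Icc τ ϑ)}

/-- membership in the class `Φ`. -/
def InPhi (t0 ϑ h : ℝ) (φ : ℝ → E n → (ℝ → E n) → ℝ) : Prop :=
  (∀ (z : E n) (w : ℝ → E n), PCh h w → ContinuousOn (fun τ => φ τ z w) (Icc t0 ϑ)) ∧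
  ∀ α > (0 : ℝ), ∃ lφ > (0 : ℝ), ∀ τ ∈ Icc t0 ϑ, ∀ (z z' : E n) (w w' : ℝ → E n),
    memP h α z w → memP h α z' w' →
    |φ τ z w - φ τ z' w'| ≤ lφ * (‖z - z'‖ + norm1 h (fun ξ => w ξ - w' ξ))

/-- condition (C1). -/
def CondC1 (t0 ϑ h : ℝ) (f : ℝ → E n → (ℝ → E n) → E l → E m → E n)
    (f0 : ℝ → E n → (ℝ → E n) → E l → E m → ℝ) : Prop :=
  ∀ (x : E n) (r : ℝ → E n), PCh h r →
    ContinuousOn (fun p : ℝ × E l × E m => f p.1 x r p.2.1 p.2.2)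
      (Icc t0 ϑ ×ˢ (univ : Set (E l × E m))) ∧
    ContinuousOn (fun p : ℝ × E l × E m => f0 p.1 x r p.2.1 p.2.2)
      (Icc t0 ϑ ×ˢ (univ : Set (E l × E m)))

/-- condition (C2). -/
def CondC2 (t0 ϑ h : ℝ) (U : Set (E l)) (V : Set (E m))
    (f : ℝ → E n → (ℝ → E n) → E l → E m → E n)
    (f0 : ℝ → E n → (ℝ → E n) → E l → E m → ℝ) : Prop :=
  ∃ cf > (0 : ℝ), ∀ t ∈ Icc t0 ϑ, ∀ (x : E n) (r : ℝ → E n), PCh h r →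
    ∀ u ∈ U, ∀ v ∈ V,
      ‖f t x r u v‖ + |f0 t x r u v| ≤ cf * (1 + ‖x‖ + norm1 h r + ‖r (-h)‖)

/-- condition (C3). -/
def CondC3 (t0 ϑ h : ℝ) (U : Set (E l)) (V : Set (E m))
    (f : ℝ → E n → (ℝ → E n) → E l → E m → E n)
    (f0 : ℝ → E n → (ℝ → E n) → E l → E m → ℝ) : Prop :=
  ∀ α > (0 : ℝ), ∃ lf > (0 : ℝ), ∀ t ∈ Icc t0 ϑ, ∀ (x x' : E n) (r r' : ℝ → E n),
    memP h α x r → memP h α x' r' → ∀ u ∈ U, ∀ v ∈ V,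
      ‖f t x r u v - f t x' r' u v‖ + |f0 t x r u v - f0 t x' r' u v| ≤
        lf * (‖x - x'‖ + norm1 h (fun ξ => r ξ - r' ξ) + ‖r (-h) - r' (-h)‖)

/-- the Hamiltonian `H`. -/
def Ham (U : Set (E l)) (V : Set (E m))
    (f : ℝ → E n → (ℝ → E n) → E l → E m → E n)
    (f0 : ℝ → E n → (ℝ → E n) → E l → E m → ℝ)
    (τ : ℝ) (z : E n) (w : ℝ → E n) (s : E n) : ℝ :=
  ⨅ u : U, ⨆ v : V, (⟪f τ z w u v, s⟫ + f0 τ z w u v)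

/-- condition (C4), Isaacs' condition. -/
def CondC4 (t0 ϑ h : ℝ) (U : Set (E l)) (V : Set (E m))
    (f : ℝ → E n → (ℝ → E n) → E l → E m → E n)
    (f0 : ℝ → E n → (ℝ → E n) → E l → E m → ℝ) : Prop :=
  ∀ t ∈ Icc t0 ϑ, ∀ (x : E n) (r : ℝ → E n), PCh h r → ∀ s : E n,
    (⨅ u : U, ⨆ v : V, (⟪f t x r u v, s⟫ + f0 t x r u v)) =
    (⨆ v : V, ⨅ u : U, (⟪f t x r u v, s⟫ + f0 t x r u v))

/-- condition (C5). -/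
def CondC5 (h : ℝ) (σ : E n → (ℝ → E n) → ℝ) : Prop :=
  ∀ α > (0 : ℝ), ∃ ls > (0 : ℝ), ∀ (x x' : E n) (r r' : ℝ → E n),
    memP h α x r → memP h α x' r' →
    |σ x r - σ x' r'| ≤ ls * (‖x - x'‖ + norm1 h (fun ξ => r ξ - r' ξ))

/-- the set of admissible control realizations on `[τ, ϑ]` with values in `U`. -/
def Ctrl (ϑ τ : ℝ) {d : ℕ} (U : Set (E d)) : Set (ℝ → E d) :=
  {u | Measurable u ∧ ∀ t ∈ Icc τ ϑ, u t ∈ U}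

/-- `x(·)` is the motion of the delay system generated from the initial position `(τ,z,w(·))`
by the control realizations `u(·)`, `v(·)`. -/
def IsMotion (ϑ h : ℝ) (f : ℝ → E n → (ℝ → E n) → E l → E m → E n)
    (τ : ℝ) (z : E n) (w : ℝ → E n) (u : ℝ → E l) (v : ℝ → E m) (x : ℝ → E n) : Prop :=
  x τ = z ∧ (∀ t ∈ Ico (τ - h) τ, x t = w (t - τ)) ∧ PCOn x (τ - h) ϑ ∧
  (∃ K : ℝ≥0, LipschitzOnWith K x (Icc τ ϑ)) ∧
  ∀ᵐ t ∂(volume : Measure ℝ), t ∈ Icc τ ϑ → HasDerivAt x (f t (x t) (seg x t) (u t) (v t)) t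

/-- `X` assigns to initial data and controls the unique generated motion. -/
def MotionMap (t0 ϑ h : ℝ) (U : Set (E l)) (V : Set (E m))
    (f : ℝ → E n → (ℝ → E n) → E l → E m → E n)
    (X : ℝ → E n → (ℝ → E n) → (ℝ → E l) → (ℝ → E m) → ℝ → E n) : Prop :=
  ∀ τ ∈ Icc t0 ϑ, ∀ (z : E n) (w : ℝ → E n), PCh h w →
    ∀ u ∈ Ctrl ϑ τ U, ∀ v ∈ Ctrl ϑ τ V,
      IsMotion ϑ h f τ z w u v (X τ z w u v) ∧
      ∀ x' : ℝ → E n, IsMotion ϑ h f τ z w u v x' → EqOn x' (X τ z w u v) (Icc (τ - h) ϑ)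

/-- the quality index `γ` along a motion. -/
def cost (ϑ : ℝ) (f0 : ℝ → E n → (ℝ → E n) → E l → E m → ℝ) (σ : E n → (ℝ → E n) → ℝ)
    (τ : ℝ) (x : ℝ → E n) (u : ℝ → E l) (v : ℝ → E m) : ℝ :=
  σ (x ϑ) (seg x ϑ) + ∫ t in τ..ϑ, f0 t (x t) (seg x t) (u t) (v t)

/-- non-anticipative strategy of the first player. -/
def Nonant1 (ϑ τ : ℝ) (U : Set (E l)) (V : Set (E m)) (Q : (ℝ → E m) → ℝ → E l) : Prop :=
  (∀ v ∈ Ctrl ϑ τ V, Q v ∈ Ctrl ϑ τ U) ∧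
  ∀ v ∈ Ctrl ϑ τ V, ∀ v' ∈ Ctrl ϑ τ V, ∀ t ∈ Icc τ ϑ,
    (∀ᵐ ξ ∂(volume : Measure ℝ), ξ ∈ Icc τ t → v ξ = v' ξ) →
    (∀ᵐ ξ ∂(volume : Measure ℝ), ξ ∈ Icc τ t → Q v ξ = Q v' ξ)

/-- non-anticipative strategy of the second player. -/
def Nonant2 (ϑ τ : ℝ) (U : Set (E l)) (V : Set (E m)) (Q : (ℝ → E l) → ℝ → E m) : Prop :=
  (∀ u ∈ Ctrl ϑ τ U, Q u ∈ Ctrl ϑ τ V) ∧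
  ∀ u ∈ Ctrl ϑ τ U, ∀ u' ∈ Ctrl ϑ τ U, ∀ t ∈ Icc τ ϑ,
    (∀ᵐ ξ ∂(volume : Measure ℝ), ξ ∈ Icc τ t → u ξ = u' ξ) →
    (∀ᵐ ξ ∂(volume : Measure ℝ), ξ ∈ Icc τ t → Q u ξ = Q u' ξ)

/-- the lower value functional `ρᵘ`. -/
def rhoU (ϑ : ℝ) (U : Set (E l)) (V : Set (E m))
    (f0 : ℝ → E n → (ℝ → E n) → E l → E m → ℝ) (σ : E n → (ℝ → E n) → ℝ)
    (X : ℝ → E n → (ℝ → E n) → (ℝ → E l) → (ℝ → E m) → ℝ → E n)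
    (τ : ℝ) (z : E n) (w : ℝ → E n) : ℝ :=
  ⨅ Q : {Q : (ℝ → E m) → ℝ → E l // Nonant1 ϑ τ U V Q},
    ⨆ v : Ctrl ϑ τ V, cost ϑ f0 σ τ (X τ z w (Q.1 v.1) v.1) (Q.1 v.1) v.1

/-- the upper value functional `ρᵛ`. -/
def rhoV (ϑ : ℝ) (U : Set (E l)) (V : Set (E m))
    (f0 : ℝ → E n → (ℝ → E n) → E l → E m → ℝ) (σ : E n → (ℝ → E n) → ℝ)
    (X : ℝ → E n → (ℝ → E n) → (ℝ → E l) → (ℝ → E m) → ℝ → E n)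
    (τ : ℝ) (z : E n) (w : ℝ → E n) : ℝ :=
  ⨆ Q : {Q : (ℝ → E l) → ℝ → E m // Nonant2 ϑ τ U V Q},
    ⨅ u : Ctrl ϑ τ U, cost ϑ f0 σ τ (X τ z w u.1 (Q.1 u.1)) u.1 (Q.1 u.1)

/-- the neighborhood `O⁺_δ(τ,z)`. -/
def Oplus (δ τ : ℝ) (z : E n) : Set (ℝ × E n) := {p | p.1 ∈ Icc τ (τ + δ) ∧ ‖p.2 - z‖ ≤ δ}

/-- the terminal condition `φ(ϑ,z,w(·)) = σ(z,w(·))`. -/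
def TerminalCond (ϑ h : ℝ) (σ : E n → (ℝ → E n) → ℝ) (φ : ℝ → E n → (ℝ → E n) → ℝ) : Prop :=
  ∀ (z : E n) (w : ℝ → E n), PCh h w → φ ϑ z w = σ z w

/-- `φ ∈ Φ` is a viscosity solution of the Cauchy problem. -/
def IsViscositySol (t0 ϑ h : ℝ) (U : Set (E l)) (V : Set (E m))
    (f : ℝ → E n → (ℝ → E n) → E l → E m → E n)
    (f0 : ℝ → E n → (ℝ → E n) → E l → E m → ℝ) (σ : E n → (ℝ → E n) → ℝ)
    (φ : ℝ → E n → (ℝ → E n) → ℝ) : Prop :=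
  InPhi t0 ϑ h φ ∧ TerminalCond ϑ h σ φ ∧
  (∀ τ ∈ Ico t0 ϑ, ∀ (z : E n) (w : ℝ → E n), PCh h w →
    ∀ ψ : ℝ × E n → ℝ, ContDiff ℝ 1 ψ → ∀ δ > (0 : ℝ),
      (∀ p ∈ Oplus δ τ z, φ τ z w - ψ (τ, z) ≤ φ p.1 p.2 (seg (ext0 τ z w) p.1) - ψ p) →
      deriv (fun t => ψ (t, z)) τ +
        Ham U V f f0 τ z w (gradient (fun x => ψ (τ, x)) z) ≤ 0) ∧
  (∀ τ ∈ Ico t0 ϑ, ∀ (z : E n) (w : ℝ → E n), PCh h w →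
    ∀ ψ : ℝ × E n → ℝ, ContDiff ℝ 1 ψ → ∀ δ > (0 : ℝ),
      (∀ p ∈ Oplus δ τ z, φ p.1 p.2 (seg (ext0 τ z w) p.1) - ψ p ≤ φ τ z w - ψ (τ, z)) →
      0 ≤ deriv (fun t => ψ (t, z)) τ +
        Ham U V f f0 τ z w (gradient (fun x => ψ (τ, x)) z))

/-- `φ` has ci-derivatives `(c, g)` at `(τ,z,w(·))`. -/
def HasCiDerivAt (ϑ h : ℝ) (φ : ℝ → E n → (ℝ → E n) → ℝ) (c : ℝ) (g : E n)
    (τ : ℝ) (z : E n) (w : ℝ → E n) : Prop :=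
  ∀ y ∈ Lam ϑ h τ z w,
    (fun p : ℝ × E n => φ p.1 p.2 (seg y p.1) - φ τ z w - (p.1 - τ) * c - ⟪p.2 - z, g⟫)
      =o[𝓝[Icc τ ϑ ×ˢ (univ : Set (E n))] ((τ, z) : ℝ × E n)]
        fun p : ℝ × E n => |p.1 - τ| + ‖p.2 - z‖

/-- the subdifferential `D⁻φ(τ,z,w(·))`. -/
def Dminus (φ : ℝ → E n → (ℝ → E n) → ℝ) (τ : ℝ) (z : E n) (w : ℝ → E n) : Set (ℝ × E n) :=
  {p | ∀ ε > (0 : ℝ), ∃ δ > (0 : ℝ), ∀ q ∈ Oplus δ τ z, q ≠ ((τ, z) : ℝ × E n) →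
    -ε ≤ (φ q.1 q.2 (seg (ext0 τ z w) q.1) - φ τ z w - (q.1 - τ) * p.1 - ⟪q.2 - z, p.2⟫) /
      (|q.1 - τ| + ‖q.2 - z‖)}

/-- the superdifferential `D⁺φ(τ,z,w(·))`. -/
def Dplus (φ : ℝ → E n → (ℝ → E n) → ℝ) (τ : ℝ) (z : E n) (w : ℝ → E n) : Set (ℝ × E n) :=
  {q | ∀ ε > (0 : ℝ), ∃ δ > (0 : ℝ), ∀ p ∈ Oplus δ τ z, p ≠ ((τ, z) : ℝ × E n) →
    (φ p.1 p.2 (seg (ext0 τ z w) p.1) - φ τ z w - (p.1 - τ) * q.1 - ⟪p.2 - z, q.2⟫) /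
      (|p.1 - τ| + ‖p.2 - z‖) ≤ ε}

/-- the lower right directional derivative `∂⁻_{(l0,l)} φ(τ,z,w(·))`. -/
def lowerDirDeriv (φ : ℝ → E n → (ℝ → E n) → ℝ) (τ : ℝ) (z : E n) (w : ℝ → E n)
    (l0 : ℝ) (lv : E n) : ℝ :=
  Filter.liminf
    (fun p : ℝ × (ℝ × E n) =>
      (φ (τ + p.2.1 * p.1) (z + p.1 • p.2.2) (seg (ext0 τ z w) (τ + p.2.1 * p.1)) - φ τ z w) / p.1)
    ((𝓝[>] (0 : ℝ)) ×ˢ 𝓝[Ici (0 : ℝ) ×ˢ (univ : Set (E n))] ((l0, lv) : ℝ × E n))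

/-- the upper right directional derivative `∂⁺_{(l0,l)} φ(τ,z,w(·))`. -/
def upperDirDeriv (φ : ℝ → E n → (ℝ → E n) → ℝ) (τ : ℝ) (z : E n) (w : ℝ → E n)
    (l0 : ℝ) (lv : E n) : ℝ :=
  Filter.limsup
    (fun p : ℝ × (ℝ × E n) =>
      (φ (τ + p.2.1 * p.1) (z + p.1 • p.2.2) (seg (ext0 τ z w) (τ + p.2.1 * p.1)) - φ τ z w) / p.1)
    ((𝓝[>] (0 : ℝ)) ×ˢ 𝓝[Ici (0 : ℝ) ×ˢ (univ : Set (E n))] ((l0, lv) : ℝ × E n))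

/-- the stability (u- and v-stability) property of a functional. -/
def IsStable (t0 ϑ h : ℝ) (U : Set (E l)) (V : Set (E m))
    (f0 : ℝ → E n → (ℝ → E n) → E l → E m → ℝ)
    (X : ℝ → E n → (ℝ → E n) → (ℝ → E l) → (ℝ → E m) → ℝ → E n)
    (φ : ℝ → E n → (ℝ → E n) → ℝ) : Prop :=
  ∀ τ ∈ Icc t0 ϑ, ∀ (z : E n) (w : ℝ → E n), PCh h w → ∀ t ∈ Icc τ ϑ,
    (⨆ v : Ctrl ϑ τ V, ⨅ u : Ctrl ϑ τ U,
        (φ t (X τ z w u.1 v.1 t) (seg (X τ z w u.1 v.1) t) +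
          ∫ ξ in τ..t, f0 ξ (X τ z w u.1 v.1 ξ) (seg (X τ z w u.1 v.1) ξ) (u.1 ξ) (v.1 ξ)))
      ≤ φ τ z w ∧
    φ τ z w ≤
      ⨅ u : Ctrl ϑ τ U, ⨆ v : Ctrl ϑ τ V,
        (φ t (X τ z w u.1 v.1 t) (seg (X τ z w u.1 v.1) t) +
          ∫ ξ in τ..t, f0 ξ (X τ z w u.1 v.1 ξ) (seg (X τ z w u.1 v.1) ξ) (u.1 ξ) (v.1 ξ))

private lemma qsq_hasDerivAt (r : ℝ) :
    HasDerivAt (fun s : ℝ => (max s 0) ^ 2) (2 * max r 0) r := by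
  rcases lt_trichotomy r 0 with h | h | h
  · have he : (fun s : ℝ => (max s 0) ^ 2) =ᶠ[nhds r] fun _ => (0 : ℝ) := by
      filter_upwards [Iio_mem_nhds h] with s hs
      simp [max_eq_right (le_of_lt (mem_Iio.mp hs))]
    have h0 : HasDerivAt (fun _ : ℝ => (0 : ℝ)) 0 r := hasDerivAt_const r 0
    have := h0.congr_of_eventuallyEq he
    simpa [max_eq_right h.le] using this
  · subst h
    rw [hasDerivAt_iff_isLittleO]
    simp only [max_self, ne_eq, OfNat.ofNat_ne_zero, not_false_eq_true, zero_pow, mul_zero,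
      smul_zero, sub_zero]
    rw [Asymptotics.isLittleO_iff]
    intro c hc
    filter_upwards [Metric.ball_mem_nhds (0 : ℝ) hc] with s hs
    rw [Metric.mem_ball, Real.dist_eq, sub_zero] at hs
    have h1 : |(max s 0) ^ 2| ≤ |s| * |s| := by
      rw [abs_of_nonneg (sq_nonneg _)]
      rcases le_or_gt s 0 with h' | h'
      · simp [max_eq_right h']; exact mul_self_nonneg s
      · rw [max_eq_left h'.le, sq]
        exact mul_le_mul (le_abs_self s) (le_abs_self s) h'.le (abs_nonneg s)
    calc ‖(max s 0) ^ 2‖ = |(max s 0) ^ 2| := rfl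
      _ ≤ |s| * |s| := h1
      _ ≤ c * ‖s‖ := by
          apply mul_le_mul_of_nonneg_right hs.le (abs_nonneg s)
  · have he : (fun s : ℝ => (max s 0) ^ 2) =ᶠ[nhds r] fun s => s ^ 2 := by
      filter_upwards [Ioi_mem_nhds h] with s hs
      simp [max_eq_left (le_of_lt (mem_Iio.mp hs))]
    have := (hasDerivAt_pow 2 r).congr_of_eventuallyEq he
    simpa [max_eq_left h.le] using this

private lemma qsq_contDiff : ContDiff ℝ 1 (fun s : ℝ => (max s 0) ^ 2) := by
  rw [contDiff_one_iff_deriv]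
  refine ⟨fun r => (qsq_hasDerivAt r).differentiableAt, ?_⟩
  have hd : deriv (fun s : ℝ => (max s 0) ^ 2) = fun r => 2 * max r 0 :=
    funext fun r => (qsq_hasDerivAt r).deriv
  rw [hd]
  exact continuous_const.mul (continuous_id.max continuous_const)

private lemma sqrt_sq_add_lip {a b c : ℝ} (ha : 0 ≤ a) (hb : 0 ≤ b) (hc : 0 ≤ c) :
    |Real.sqrt (a ^ 2 + c) - Real.sqrt (b ^ 2 + c)| ≤ |a - b| := by
  have key : ∀ x y : ℝ, 0 ≤ x → 0 ≤ y →
      Real.sqrt (x ^ 2 + c) - Real.sqrt (y ^ 2 + c) ≤ |x - y| := by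
    intro x y hx hy
    have hS : Real.sqrt (y ^ 2 + c) ^ 2 = y ^ 2 + c := Real.sq_sqrt (by positivity)
    have hyS : y ≤ Real.sqrt (y ^ 2 + c) := by
      have := Real.sqrt_le_sqrt (le_add_of_nonneg_right hc : y ^ 2 ≤ y ^ 2 + c)
      rwa [Real.sqrt_sq hy] at this
    have hd : x - y ≤ |x - y| := le_abs_self _
    have hd0 : 0 ≤ |x - y| := abs_nonneg _
    have h1 : Real.sqrt (x ^ 2 + c) ≤
        Real.sqrt ((Real.sqrt (y ^ 2 + c) + |x - y|) ^ 2) := by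
      apply Real.sqrt_le_sqrt
      nlinarith [Real.sqrt_nonneg (y ^ 2 + c)]
    rw [Real.sqrt_sq (by positivity)] at h1
    linarith
  rw [abs_sub_le_iff]
  exact ⟨key a b ha hb, by rw [abs_sub_comm]; exact key b a hb ha⟩

theorem test_function_eta_exists (n : ℕ) (hn : 0 < n) (τ ν : ℝ) (hτν : τ < ν) (z : E n)
    (cs β θ αφ : ℝ) (hcs : 0 < cs) (hβ : 0 < β) (hθ : 0 < θ) (hαφ : 0 < αφ) :
    ∃ η : ℝ × E n → ℝ, ContDiff ℝ 1 η ∧ η (τ, z) = 0 ∧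
      (∀ (t : ℝ) (x : E n), t ∈ Icc τ ν → ‖x - z‖ ≤ (t - τ) * cs + β → 0 ≤ η (t, x)) ∧
      (∀ (t : ℝ) (x : E n), t ∈ Icc τ ν → ‖x - z‖ = (t - τ) * cs + β →
        2 * αφ + 4 * (ν - τ) * θ ≤ η (t, x)) ∧
      (∀ (t : ℝ) (x : E n), t ∈ Icc τ ν → ‖x - z‖ ≤ (t - τ) * cs + β →
        ‖gradient (fun y => η (t, y)) x‖ ≤ -(1 / cs) * deriv (fun s => η (s, x)) t) ∧
      ∃ lη > (0 : ℝ), ∀ (t : ℝ) (x x' : E n), t ∈ Icc τ ν →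
        ‖x - z‖ ≤ (t - τ) * cs + β → ‖x' - z‖ ≤ (t - τ) * cs + β →
        |η (t, x) - η (t, x')| ≤ lη * ‖x - x'‖ := by
  have hντ : 0 < ν - τ := sub_pos.mpr hτν
  set M : ℝ := 2 * αφ + 4 * (ν - τ) * θ with hM
  have hMpos : 0 < M := by positivity
  set ε : ℝ := β / 2 with hε
  have hεpos : 0 < ε := by positivity
  set K : ℝ := 4 * M / β ^ 2 with hK
  have hKpos : 0 < K := by positivity
  have hKε : K * ε ^ 2 = M := by rw [hK, hε]; field_simp; ring
  -- basic sqrt facts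
  have hle1 : ∀ x : E n, ‖x - z‖ ≤ Real.sqrt (‖x - z‖ ^ 2 + ε ^ 2) := by
    intro x
    have := Real.sqrt_le_sqrt (le_add_of_nonneg_right (sq_nonneg ε) :
      ‖x - z‖ ^ 2 ≤ ‖x - z‖ ^ 2 + ε ^ 2)
    rwa [Real.sqrt_sq (norm_nonneg _)] at this
  have hle2 : ∀ x : E n, Real.sqrt (‖x - z‖ ^ 2 + ε ^ 2) ≤ ‖x - z‖ + ε := by
    intro x
    have h1 : ‖x - z‖ ^ 2 + ε ^ 2 ≤ (‖x - z‖ + ε) ^ 2 := by nlinarith [norm_nonneg (x - z)]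
    have := Real.sqrt_le_sqrt h1
    rwa [Real.sqrt_sq (by positivity)] at this
  refine ⟨fun p => K * (max (Real.sqrt (‖p.2 - z‖ ^ 2 + ε ^ 2) - cs * (p.1 - τ) - ε) 0) ^ 2,
    ?_, ?_, ?_, ?_, ?_, ?_⟩
  · -- ContDiff
    have h1 : ContDiff ℝ 1 (fun p : ℝ × E n => ‖p.2 - z‖ ^ 2 + ε ^ 2) :=
      ((contDiff_snd.sub contDiff_const).norm_sq ℝ).add contDiff_const
    have h2 : ContDiff ℝ 1 fun p : ℝ × E n => Real.sqrt (‖p.2 - z‖ ^ 2 + ε ^ 2) := by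
      rw [contDiff_iff_contDiffAt]
      intro p
      exact (Real.contDiffAt_sqrt (by positivity)).comp p h1.contDiffAt
    have h3 : ContDiff ℝ 1 fun p : ℝ × E n =>
        Real.sqrt (‖p.2 - z‖ ^ 2 + ε ^ 2) - cs * (p.1 - τ) - ε :=
      (h2.sub (contDiff_const.mul (contDiff_fst.sub contDiff_const))).sub contDiff_const
    exact contDiff_const.mul (qsq_contDiff.comp h3)
  · -- value at (τ, z)
    simp [Real.sqrt_sq hεpos.le]
  · -- nonneg
    intro t x _ _
    positivity
  · -- boundary lower bound
    intro t x ht hb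
    have hg : ε ≤ Real.sqrt (‖x - z‖ ^ 2 + ε ^ 2) - cs * (t - τ) - ε := by
      have h1 := hle1 x
      have h2 : cs * (t - τ) = (t - τ) * cs := mul_comm _ _
      linarith [hb, hε]
    have hg' : ε ≤ max (Real.sqrt (‖x - z‖ ^ 2 + ε ^ 2) - cs * (t - τ) - ε) 0 :=
      le_trans hg (le_max_left _ _)
    have h2 : ε ^ 2 ≤ (max (Real.sqrt (‖x - z‖ ^ 2 + ε ^ 2) - cs * (t - τ) - ε) 0) ^ 2 :=
      pow_le_pow_left₀ hεpos.le hg' 2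
    calc M = K * ε ^ 2 := hKε.symm
      _ ≤ _ := mul_le_mul_of_nonneg_left h2 hKpos.le
  · -- gradient inequality
    intro t x ht hb
    have upos : (0 : ℝ) < ‖x - z‖ ^ 2 + ε ^ 2 := by positivity
    have s0pos : (0 : ℝ) < Real.sqrt (‖x - z‖ ^ 2 + ε ^ 2) := Real.sqrt_pos.mpr upos
    set s0 : ℝ := Real.sqrt (‖x - z‖ ^ 2 + ε ^ 2) with hs0
    set g : ℝ := s0 - cs * (t - τ) - ε with hg
    set m : ℝ := max g 0 with hm
    have hm0 : 0 ≤ m := le_max_right _ _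
    -- time derivative
    have hinner : HasDerivAt (fun s : ℝ => s0 - cs * (s - τ) - ε) (-cs) t := by
      have h1 : HasDerivAt (fun s : ℝ => cs * (s - τ)) cs t := by
        simpa using ((hasDerivAt_id t).sub_const τ).const_mul cs
      simpa using ((hasDerivAt_const t s0).sub h1).sub_const ε
    have hcomp : HasDerivAt (fun s : ℝ => K * (max (s0 - cs * (s - τ) - ε) 0) ^ 2)
        (K * (2 * m * -cs)) t := by
      have h2 := ((qsq_hasDerivAt g).comp t hinner).const_mul K
      simpa [Function.comp, hg, mul_assoc] using h2
    have hderiv : deriv (fun s : ℝ =>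
        K * (max (Real.sqrt (‖x - z‖ ^ 2 + ε ^ 2) - cs * (s - τ) - ε) 0) ^ 2) t
        = K * (2 * m * -cs) := by
      have := hcomp.deriv
      simpa [hs0] using this
    -- gradient
    have hu : HasFDerivAt (fun y : E n => ‖y - z‖ ^ 2 + ε ^ 2)
        (2 • (innerSL ℝ (x - z)).comp (ContinuousLinearMap.id ℝ (E n))) x := by
      have h1 : HasFDerivAt (fun y : E n => y - z) (ContinuousLinearMap.id ℝ (E n)) x :=
        (hasFDerivAt_id x).sub_const z
      simpa using h1.norm_sq.add_const (ε ^ 2)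
    have hqs : HasDerivAt (fun r : ℝ => K * (max (Real.sqrt r - cs * (t - τ) - ε) 0) ^ 2)
        (K * (2 * m * (1 / (2 * s0)))) (‖x - z‖ ^ 2 + ε ^ 2) := by
      have hsq : HasDerivAt (fun r : ℝ => Real.sqrt r - cs * (t - τ) - ε)
          (1 / (2 * s0)) (‖x - z‖ ^ 2 + ε ^ 2) :=
        ((Real.hasDerivAt_sqrt (ne_of_gt upos)).sub_const _).sub_const _
      have h2 := ((qsq_hasDerivAt (Real.sqrt (‖x - z‖ ^ 2 + ε ^ 2) - cs * (t - τ) - ε)).comp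
        (‖x - z‖ ^ 2 + ε ^ 2) hsq).const_mul K
      have hgg : Real.sqrt (‖x - z‖ ^ 2 + ε ^ 2) - cs * (t - τ) - ε = g := by rw [hg, hs0]
      rw [hgg] at h2
      simpa [Function.comp, mul_assoc] using h2
    have hfull : HasFDerivAt
        (fun y : E n => K * (max (Real.sqrt (‖y - z‖ ^ 2 + ε ^ 2) - cs * (t - τ) - ε) 0) ^ 2)
        ((K * (2 * m * (1 / (2 * s0)))) •
          (2 • (innerSL ℝ (x - z)).comp (ContinuousLinearMap.id ℝ (E n)))) x :=
      by have := hqs.comp_hasFDerivAt x hu; exact this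
    have hgrad : HasGradientAt
        (fun y : E n => K * (max (Real.sqrt (‖y - z‖ ^ 2 + ε ^ 2) - cs * (t - τ) - ε) 0) ^ 2)
        ((K * (2 * m * (1 / (2 * s0))) * 2) • (x - z)) x := by
      rw [hasGradientAt_iff_hasFDerivAt]
      refine hfull.congr_fderiv ?_
      ext y
      simp only [InnerProductSpace.toDual_apply_apply, ContinuousLinearMap.coe_smul',
        Pi.smul_apply, ContinuousLinearMap.coe_comp', Function.comp_apply,
        ContinuousLinearMap.coe_id', id_eq, innerSL_apply_apply, smul_eq_mul,
        real_inner_smul_left]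
      ring
    have hgval : gradient (fun y : E n =>
        K * (max (Real.sqrt (‖y - z‖ ^ 2 + ε ^ 2) - cs * (t - τ) - ε) 0) ^ 2) x
        = (K * (2 * m * (1 / (2 * s0))) * 2) • (x - z) := hgrad.gradient
    show ‖gradient (fun y : E n =>
        K * (max (Real.sqrt (‖y - z‖ ^ 2 + ε ^ 2) - cs * (t - τ) - ε) 0) ^ 2) x‖ ≤
      -(1 / cs) * deriv (fun s : ℝ =>
        K * (max (Real.sqrt (‖x - z‖ ^ 2 + ε ^ 2) - cs * (s - τ) - ε) 0) ^ 2) t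
    rw [hgval, hderiv, norm_smul, Real.norm_eq_abs]
    have hc0 : (0 : ℝ) ≤ K * (2 * m * (1 / (2 * s0))) * 2 := by
      apply mul_nonneg _ (by norm_num)
      exact mul_nonneg hKpos.le (mul_nonneg (by linarith) (by positivity))
    rw [abs_of_nonneg hc0]
    have hrhs : -(1 / cs) * (K * (2 * m * -cs)) = 2 * K * m := by
      field_simp
    rw [hrhs]
    have hxz : ‖x - z‖ ≤ s0 := hle1 x
    calc K * (2 * m * (1 / (2 * s0))) * 2 * ‖x - z‖
        ≤ K * (2 * m * (1 / (2 * s0))) * 2 * s0 := by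
          exact mul_le_mul_of_nonneg_left hxz hc0
      _ = 2 * K * m := by field_simp
  · -- Lipschitz
    refine ⟨2 * K * β, by positivity, ?_⟩
    intro t x x' ht hb hb'
    set g : ℝ := Real.sqrt (‖x - z‖ ^ 2 + ε ^ 2) - cs * (t - τ) - ε with hg
    set g' : ℝ := Real.sqrt (‖x' - z‖ ^ 2 + ε ^ 2) - cs * (t - τ) - ε with hg'
    have hgle : g ≤ β := by
      have h1 := hle2 x
      have h2 : cs * (t - τ) = (t - τ) * cs := mul_comm _ _
      rw [hg, h2]
      linarith
    have hgle' : g' ≤ β := by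
      have h1 := hle2 x'
      have h2 : cs * (t - τ) = (t - τ) * cs := mul_comm _ _
      rw [hg', h2]
      linarith
    have hmle : max g 0 ≤ β := max_le hgle hβ.le
    have hmle' : max g' 0 ≤ β := max_le hgle' hβ.le
    have hmd : |max g 0 - max g' 0| ≤ ‖x - x'‖ := by
      refine le_trans (abs_max_sub_max_le_abs g g' 0) ?_
      have h1 : |g - g'| = |Real.sqrt (‖x - z‖ ^ 2 + ε ^ 2) -
          Real.sqrt (‖x' - z‖ ^ 2 + ε ^ 2)| := by rw [hg, hg']; ring_nf
      rw [h1]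
      refine le_trans (sqrt_sq_add_lip (norm_nonneg _) (norm_nonneg _) (sq_nonneg ε)) ?_
      refine le_trans (abs_norm_sub_norm_le _ _) ?_
      have : (x - z) - (x' - z) = x - x' := by abel
      rw [this]
    have key : |(max g 0) ^ 2 - (max g' 0) ^ 2| ≤ 2 * β * ‖x - x'‖ := by
      have hfact : (max g 0) ^ 2 - (max g' 0) ^ 2
          = (max g 0 + max g' 0) * (max g 0 - max g' 0) := by ring
      rw [hfact, abs_mul]
      have hsum : |max g 0 + max g' 0| ≤ 2 * β := by
        rw [abs_of_nonneg (by positivity)]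
        linarith
      exact mul_le_mul hsum hmd (abs_nonneg _) (by positivity)
    have : K * (max g 0) ^ 2 - K * (max g' 0) ^ 2 = K * ((max g 0) ^ 2 - (max g' 0) ^ 2) := by
      ring
    rw [show (2 * K * β : ℝ) = K * (2 * β) by ring]
    calc |K * (max g 0) ^ 2 - K * (max g' 0) ^ 2|
        = K * |(max g 0) ^ 2 - (max g' 0) ^ 2| := by
          rw [this, abs_mul, abs_of_pos hKpos]
      _ ≤ K * (2 * β * ‖x - x'‖) := mul_le_mul_of_nonneg_left key hKpos.le
      _ = K * (2 * β) * ‖x - x'‖ := by ring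
end DGPaper
end
end

section
/- Let φ ∈ Φ. Then the following two properties are equivalent: (i) for every (τ,z,w(·)) ∈ G with τ < ϑ, every continuously differentiable ψ : ℝ × ℝ^n → ℝ and every δ > 0, if φ(τ,z,w(·)) − ψ(τ,z) ≤ φ(t,x,κ_t(·)) − ψ(t,x) for all (t,x) ∈ O⁺_δ(τ,z), where κ(·) ∈ Λ₀(τ,z,w(·)), then ∂ψ(τ,z)/∂τ + H(τ,z,w(·), ∇_z ψ(τ,z)) ≤ 0; (ii) for every (τ,z,w(·)) ∈ G with τ < ϑ, one has p0 + H(τ,z,w(·), p) ≤ 0 for all (p0,p) ∈ D⁻φ(τ,z,w(·)). -/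
noncomputable section

open MeasureTheory Set Filter Topology Asymptotics RealInnerProductSpace
open scoped NNReal

namespace DGPaper

variable {n l m : ℕ}

set_option maxHeartbeats 1000000

lemma exists_modulus_fn (θ : ℝ → ℝ) (hmono : Monotone θ) (h0 : ∀ s, 0 ≤ θ s)
    (hneg : ∀ s ≤ (0:ℝ), θ s = 0)
    (htends : ∀ ε > (0:ℝ), ∃ δ > (0:ℝ), ∀ s ≤ δ, θ s ≤ ε) :
    ∃ g g' : ℝ → ℝ, (∀ s, HasDerivAt g (g' s) s) ∧ Continuous g' ∧
      g 0 = 0 ∧ g' 0 = 0 ∧ (∀ s, 0 ≤ g s) ∧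
      (∀ s, 0 ≤ s → 4 * s * θ s ≤ g s) ∧ (∀ s, 0 ≤ s → g s ≤ 4 * s * θ (4 * s)) := by
  have hIθ : ∀ a b : ℝ, IntervalIntegrable θ volume a b :=
    fun a b => (hmono.monotoneOn _).intervalIntegrable
  set θ₂ : ℝ → ℝ := fun s => if 0 < s then s⁻¹ * ∫ u in s..(2*s), θ u else 0 with hθ₂def
  have hθ₂pos : ∀ s, 0 < s → θ₂ s = s⁻¹ * ∫ u in s..(2*s), θ u := by
    intro s hs; simp only [hθ₂def, if_pos hs]
  have hθ₂neg : ∀ s, ¬ 0 < s → θ₂ s = 0 := by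
    intro s hs; simp only [hθ₂def, if_neg hs]
  -- lower bound for the inner integral
  have hIlow : ∀ s, 0 < s → s * θ s ≤ ∫ u in s..(2*s), θ u := by
    intro s hs
    have h := intervalIntegral.integral_mono_on (by linarith : s ≤ 2*s)
      (intervalIntegrable_const (c := θ s)) (hIθ s (2*s))
      (fun x hx => hmono hx.1)
    rw [intervalIntegral.integral_const] at h
    have e : (2*s - s) • θ s = s * θ s := by ring_nf
    linarith [h, e.symm.trans_le h]
  have hIup : ∀ s, 0 < s → (∫ u in s..(2*s), θ u) ≤ s * θ (2*s) := by
    intro s hs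
    have h := intervalIntegral.integral_mono_on (by linarith : s ≤ 2*s)
      (hIθ s (2*s)) (intervalIntegrable_const (c := θ (2*s)))
      (fun x hx => hmono hx.2)
    rw [intervalIntegral.integral_const] at h
    have e : (2*s - s) • θ (2*s) = s * θ (2*s) := by ring_nf
    linarith [h.trans_eq e]
  have hθle : ∀ s, 0 < s → θ s ≤ θ₂ s := by
    intro s hs
    rw [hθ₂pos s hs]
    calc θ s = s⁻¹ * (s * θ s) := by field_simp
    _ ≤ s⁻¹ * ∫ u in s..(2*s), θ u :=
        mul_le_mul_of_nonneg_left (hIlow s hs) (by positivity)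
  have hθ₂le : ∀ s, 0 < s → θ₂ s ≤ θ (2*s) := by
    intro s hs
    rw [hθ₂pos s hs]
    calc s⁻¹ * (∫ u in s..(2*s), θ u) ≤ s⁻¹ * (s * θ (2*s)) :=
        mul_le_mul_of_nonneg_left (hIup s hs) (by positivity)
    _ = θ (2*s) := by field_simp
  have hθ₂nonneg : ∀ s, 0 ≤ θ₂ s := by
    intro s
    by_cases hs : 0 < s
    · rw [hθ₂pos s hs]
      have : 0 ≤ ∫ u in s..(2*s), θ u :=
        intervalIntegral.integral_nonneg (by linarith) (fun u _ => h0 u)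
      positivity
    · rw [hθ₂neg s hs]
  -- continuity of θ₂
  have hPθc : Continuous fun y : ℝ => ∫ u in (0:ℝ)..y, θ u :=
    intervalIntegral.continuous_primitive hIθ 0
  have hθ₂c : Continuous θ₂ := by
    rw [continuous_iff_continuousAt]
    intro s₀
    rcases lt_trichotomy s₀ 0 with hs₀ | hs₀ | hs₀
    · apply continuousAt_const.congr
      filter_upwards [eventually_lt_nhds hs₀] with s hs
      rw [hθ₂neg s (by linarith)]
    · subst hs₀
      rw [Metric.continuousAt_iff]
      intro ε hε
      obtain ⟨δ₁, hδ₁, hδ⟩ := htends (ε/2) (by linarith)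
      refine ⟨δ₁/2, by linarith, fun s hs => ?_⟩
      rw [Real.dist_eq, hθ₂neg 0 (lt_irrefl 0), sub_zero]
      by_cases hpos : 0 < s
      · rw [abs_of_nonneg (hθ₂nonneg s)]
        have h1 : θ₂ s ≤ θ (2*s) := hθ₂le s hpos
        have h2 : θ (2*s) ≤ ε/2 := by
          apply hδ
          rw [Real.dist_eq, sub_zero] at hs
          have := le_abs_self s
          linarith [abs_lt.1 hs]
        linarith
      · rw [hθ₂neg s hpos, abs_zero]; exact hε
    · have hev : θ₂ =ᶠ[𝓝 s₀]
          (fun s => s⁻¹ * ((∫ u in (0:ℝ)..(2*s), θ u) - ∫ u in (0:ℝ)..s, θ u)) := by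
        filter_upwards [eventually_gt_nhds hs₀] with s hs
        rw [hθ₂pos s hs, intervalIntegral.integral_interval_sub_left (hIθ 0 (2*s)) (hIθ 0 s)]
      have hc : ContinuousAt
          (fun s : ℝ => s⁻¹ * ((∫ u in (0:ℝ)..(2*s), θ u) - ∫ u in (0:ℝ)..s, θ u)) s₀ := by
        apply ContinuousAt.mul
        · exact continuousAt_inv₀ (ne_of_gt hs₀)
        · exact ((hPθc.comp (continuous_const.mul continuous_id)).sub hPθc).continuousAt
      exact hc.congr hev.symm
  -- the function g
  have hIθ₂ : ∀ a b : ℝ, IntervalIntegrable θ₂ volume a b :=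
    fun a b => hθ₂c.intervalIntegrable a b
  set P₂ : ℝ → ℝ := fun y => ∫ u in (0:ℝ)..y, θ₂ u with hP₂def
  have hP₂ : ∀ y, HasDerivAt P₂ (θ₂ y) y := by
    intro y
    exact intervalIntegral.integral_hasDerivAt_right (hIθ₂ 0 y)
      (hθ₂c.stronglyMeasurableAtFilter volume (𝓝 y)) hθ₂c.continuousAt
  refine ⟨fun s => 4 * (P₂ (2*s) - P₂ s), fun s => 4 * (2 * θ₂ (2*s) - θ₂ s), ?_, ?_, ?_, ?_, ?_, ?_, ?_⟩
  · intro s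
    have hinner : HasDerivAt (fun s : ℝ => 2*s) 2 s := by
      simpa using (hasDerivAt_id s).const_mul (2:ℝ)
    have h1 : HasDerivAt (fun s : ℝ => P₂ (2*s)) (θ₂ (2*s) * 2) s := (hP₂ (2*s)).comp s hinner
    have := (h1.sub (hP₂ s)).const_mul (4:ℝ)
    show HasDerivAt _ (4 * (2 * θ₂ (2*s) - θ₂ s)) s
    have e : (4 * (2 * θ₂ (2*s) - θ₂ s)) = 4 * (θ₂ (2*s) * 2 - θ₂ s) := by ring
    rw [e]; exact this
  · have h2 : Continuous fun s : ℝ => θ₂ (2*s) := hθ₂c.comp (continuous_const.mul continuous_id)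
    exact (continuous_const.mul ((continuous_const.mul h2).sub hθ₂c) : Continuous fun s => 4 * (2 * θ₂ (2*s) - θ₂ s))
  · norm_num
  · have h00 : θ₂ 0 = 0 := hθ₂neg 0 (lt_irrefl 0)
    show 4 * (2 * θ₂ (2*0) - θ₂ 0) = 0
    norm_num [h00]
  · intro s
    rcases le_or_gt 0 s with hs | hs
    · have hkey : s * θ s ≤ P₂ (2*s) - P₂ s := by
        rw [hP₂def]
        simp only
        rw [intervalIntegral.integral_interval_sub_left (hIθ₂ 0 (2*s)) (hIθ₂ 0 s)]
        have h := intervalIntegral.integral_mono_on (by linarith : s ≤ 2*s)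
          (intervalIntegrable_const (c := θ s)) (hIθ₂ s (2*s))
          (fun u hu => ?_)
        · rw [intervalIntegral.integral_const] at h
          have e : (2*s - s) • θ s = s * θ s := by ring_nf
          linarith [e.symm.trans_le h]
        · rcases lt_or_ge 0 u with hu0 | hu0
          · exact (hmono hu.1).trans (hθle u hu0)
          · have hu' : u = 0 := le_antisymm hu0 (hs.trans hu.1)
            have hs' : s = 0 := by
              have := hu.1; rw [hu'] at this; linarith
            rw [hs', hneg 0 le_rfl]
            exact hθ₂nonneg u
      show 0 ≤ 4 * (P₂ (2*s) - P₂ s)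
      nlinarith [h0 s]
    · have : P₂ (2*s) - P₂ s = 0 := by
        rw [hP₂def]
        simp only
        rw [intervalIntegral.integral_interval_sub_left (hIθ₂ 0 (2*s)) (hIθ₂ 0 s)]
        have : EqOn θ₂ 0 (uIcc s (2*s)) := by
          intro u hu
          have hu2 : u ≤ s := by
            rcases hu with ⟨_, h2⟩
            have : max s (2*s) = s := max_eq_left (by linarith)
            rw [this] at h2; exact h2
          simp only [Pi.zero_apply]
          exact hθ₂neg u (by linarith)
        rw [intervalIntegral.integral_congr this]
        simp
      show 0 ≤ 4 * (P₂ (2*s) - P₂ s)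
      rw [this]; norm_num
  · intro s hs
    have hkey : s * θ s ≤ P₂ (2*s) - P₂ s := by
      rw [hP₂def]
      simp only
      rw [intervalIntegral.integral_interval_sub_left (hIθ₂ 0 (2*s)) (hIθ₂ 0 s)]
      have h := intervalIntegral.integral_mono_on (by linarith : s ≤ 2*s)
        (intervalIntegrable_const (c := θ s)) (hIθ₂ s (2*s))
        (fun u hu => ?_)
      · rw [intervalIntegral.integral_const] at h
        have e : (2*s - s) • θ s = s * θ s := by ring_nf
        linarith [e.symm.trans_le h]
      · rcases lt_or_ge 0 u with hu0 | hu0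
        · exact (hmono hu.1).trans (hθle u hu0)
        · have hs' : s = 0 := le_antisymm (by linarith [hu.1]) hs
          rw [hs', hneg 0 le_rfl]
          exact hθ₂nonneg u
    show 4 * s * θ s ≤ 4 * (P₂ (2*s) - P₂ s)
    linarith
  · intro s hs
    have hkey : P₂ (2*s) - P₂ s ≤ s * θ (4*s) := by
      rw [hP₂def]
      simp only
      rw [intervalIntegral.integral_interval_sub_left (hIθ₂ 0 (2*s)) (hIθ₂ 0 s)]
      have h := intervalIntegral.integral_mono_on (by linarith : s ≤ 2*s)
        (hIθ₂ s (2*s)) (intervalIntegrable_const (c := θ (4*s)))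
        (fun u hu => ?_)
      · rw [intervalIntegral.integral_const] at h
        have e : (2*s - s) • θ (4*s) = s * θ (4*s) := by ring_nf
        linarith [h.trans_eq e]
      · rcases lt_or_ge 0 u with hu0 | hu0
        · exact (hθ₂le u hu0).trans (hmono (by linarith [hu.2]))
        · rw [hθ₂neg u (not_lt.2 hu0)]
          exact h0 (4*s)
    show 4 * (P₂ (2*s) - P₂ s) ≤ 4 * s * θ (4*s)
    linarith


lemma sqrt_le_abs_add {n : ℕ} (a : ℝ) (d : E n) :
    Real.sqrt (a * a + ⟪d, d⟫) ≤ |a| + ‖d‖ := by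
  rw [real_inner_self_eq_norm_mul_norm]
  have h : a * a + ‖d‖ * ‖d‖ ≤ (|a| + ‖d‖) * (|a| + ‖d‖) := by
    have := abs_mul_abs_self a
    nlinarith [abs_nonneg a, norm_nonneg d, mul_nonneg (abs_nonneg a) (norm_nonneg d)]
  calc Real.sqrt (a * a + ‖d‖ * ‖d‖) ≤ Real.sqrt ((|a| + ‖d‖) * (|a| + ‖d‖)) :=
        Real.sqrt_le_sqrt h
  _ = |a| + ‖d‖ := Real.sqrt_mul_self (by positivity)

lemma abs_le_sqrt' {n : ℕ} (a : ℝ) (d : E n) : |a| ≤ Real.sqrt (a * a + ⟪d, d⟫) := by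
  calc |a| = Real.sqrt (a * a) := (Real.sqrt_mul_self_eq_abs a).symm
  _ ≤ _ := Real.sqrt_le_sqrt (by linarith [real_inner_self_nonneg (x := d)])

lemma norm_le_sqrt' {n : ℕ} (a : ℝ) (d : E n) : ‖d‖ ≤ Real.sqrt (a * a + ⟪d, d⟫) := by
  calc ‖d‖ = Real.sqrt (‖d‖ * ‖d‖) := (Real.sqrt_mul_self (norm_nonneg d)).symm
  _ ≤ _ := by
      rw [← real_inner_self_eq_norm_mul_norm]
      exact Real.sqrt_le_sqrt (by nlinarith [mul_self_nonneg a])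

lemma exists_test_fn {n : ℕ} (τ : ℝ) (z : E n) (p0 : ℝ) (pv : E n)
    (g g' : ℝ → ℝ) (hg : ∀ s, HasDerivAt g (g' s) s) (hg'c : Continuous g')
    (hg0 : g 0 = 0) (hg'0 : g' 0 = 0) (hgnn : ∀ s, 0 ≤ g s)
    (hsmall : ∀ ε > (0:ℝ), ∃ δ > (0:ℝ), ∀ s, 0 ≤ s → s ≤ δ → g s ≤ ε * s) :
    ∃ ψ : ℝ × E n → ℝ, ContDiff ℝ 1 ψ ∧
      deriv (fun t => ψ (t, z)) τ = p0 ∧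
      gradient (fun x => ψ (τ, x)) z = pv ∧
      ∀ p : ℝ × E n, ψ p - ψ (τ, z) = (p.1 - τ) * p0 + ⟪p.2 - z, pv⟫ -
        g (Real.sqrt ((p.1 - τ) * (p.1 - τ) + ⟪p.2 - z, p.2 - z⟫)) := by
  set F1 := ContinuousLinearMap.fst ℝ ℝ (E n) with hF1
  set F2 := ContinuousLinearMap.snd ℝ ℝ (E n) with hF2
  set L : (ℝ × E n) →L[ℝ] ℝ := p0 • F1 + (innerSL ℝ pv).comp F2 with hL
  have hLapp : ∀ q : ℝ × E n, L q = p0 * q.1 + ⟪pv, q.2⟫ := by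
    intro q; simp [hL, hF1, hF2]
  set S : ℝ × E n → ℝ := fun q => (q.1 - τ) * (q.1 - τ) + ⟪q.2 - z, q.2 - z⟫ with hSdef
  set ρ : ℝ × E n → ℝ := fun q => Real.sqrt (S q) with hρdef
  set C : ℝ := p0 * τ + ⟪pv, z⟫ with hC
  set ψ : ℝ × E n → ℝ := fun q => L q - C - g (ρ q) with hψ
  have hSnn : ∀ q, 0 ≤ S q := fun q => add_nonneg (mul_self_nonneg _) real_inner_self_nonneg
  have hρnn : ∀ q, 0 ≤ ρ q := fun q => Real.sqrt_nonneg _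
  have hSpt : S (τ, z) = 0 := by simp [hSdef]
  have hρpt : ρ (τ, z) = 0 := by rw [hρdef]; simp only; rw [hSpt, Real.sqrt_zero]
  have hSne : ∀ q : ℝ × E n, q ≠ (τ, z) → S q ≠ 0 := by
    intro q hq h
    apply hq
    rw [hSdef] at h
    simp only at h
    have hinn := real_inner_self_nonneg (x := q.2 - z)
    have hms := mul_self_nonneg (q.1 - τ)
    have h1 : (q.1 - τ) * (q.1 - τ) = 0 := by linarith
    have h2 : ⟪q.2 - z, q.2 - z⟫ = (0:ℝ) := by linarith
    have hq1 : q.1 = τ := by have := mul_self_eq_zero.1 h1; linarith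
    have hq2 : q.2 = z := by
      have := inner_self_eq_zero (𝕜 := ℝ) (x := q.2 - z) |>.1 h2
      rwa [sub_eq_zero] at this
    exact Prod.ext hq1 hq2
  -- bounds on ρ
  have habs : ∀ q : ℝ × E n, |q.1 - τ| ≤ ρ q := fun q => abs_le_sqrt' _ _
  have hnrm : ∀ q : ℝ × E n, ‖q.2 - z‖ ≤ ρ q := fun q => norm_le_sqrt' _ _
  have hρle : ∀ q : ℝ × E n, ρ q ≤ |q.1 - τ| + ‖q.2 - z‖ := fun q => sqrt_le_abs_add _ _
  -- derivative of S
  set DS : (ℝ × E n) → ((ℝ × E n) →L[ℝ] ℝ) := fun q =>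
    ((q.1 - τ) • F1 + (q.1 - τ) • F1) +
      (fderivInnerCLM ℝ (q.2 - z, q.2 - z)).comp (F2.prod F2) with hDS
  have hfst : ∀ q : ℝ × E n, HasFDerivAt (fun q : ℝ × E n => q.1 - τ) F1 q :=
    fun q => hasFDerivAt_fst.sub_const τ
  have hsnd : ∀ q : ℝ × E n, HasFDerivAt (fun q : ℝ × E n => q.2 - z) F2 q :=
    fun q => hasFDerivAt_snd.sub_const z
  have hS : ∀ q, HasFDerivAt S (DS q) q :=
    fun q => ((hfst q).mul (hfst q)).add ((hsnd q).inner ℝ (hsnd q))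
  have hDSnorm : ∀ q, ‖DS q‖ ≤ 4 * ρ q := by
    intro q
    apply ContinuousLinearMap.opNorm_le_bound _ (by positivity)
    intro v
    have happ : DS q v = ((q.1 - τ) * v.1 + (q.1 - τ) * v.1) +
        (⟪q.2 - z, v.2⟫ + ⟪v.2, q.2 - z⟫) := by
      simp [hDS, hF1, hF2]
    rw [happ]
    have h1 : |v.1| ≤ ‖v‖ := by
      have := norm_fst_le v; simpa using this
    have h2 : ‖v.2‖ ≤ ‖v‖ := norm_snd_le v
    have hi1 : |⟪q.2 - z, v.2⟫| ≤ ‖q.2 - z‖ * ‖v.2‖ := by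
      have := norm_inner_le_norm (𝕜 := ℝ) (q.2 - z) v.2; simpa using this
    have hi2 : |⟪v.2, q.2 - z⟫| ≤ ‖q.2 - z‖ * ‖v.2‖ := by
      have := norm_inner_le_norm (𝕜 := ℝ) v.2 (q.2 - z); simpa [mul_comm] using this
    have habs' := habs q
    have hnrm' := hnrm q
    rw [Real.norm_eq_abs]
    have hb : |((q.1 - τ) * v.1 + (q.1 - τ) * v.1) + (⟪q.2 - z, v.2⟫ + ⟪v.2, q.2 - z⟫)|
        ≤ 2 * (|q.1 - τ| * |v.1|) + 2 * (‖q.2 - z‖ * ‖v.2‖) := by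
      calc _ ≤ |(q.1 - τ) * v.1 + (q.1 - τ) * v.1| + |⟪q.2 - z, v.2⟫ + ⟪v.2, q.2 - z⟫| :=
            abs_add_le _ _
      _ ≤ (|(q.1 - τ) * v.1| + |(q.1 - τ) * v.1|) + (|⟪q.2 - z, v.2⟫| + |⟪v.2, q.2 - z⟫|) :=
            add_le_add (abs_add_le _ _) (abs_add_le _ _)
      _ ≤ _ := by rw [abs_mul]; linarith
    have t1 : |q.1 - τ| * |v.1| ≤ ρ q * ‖v‖ := mul_le_mul habs' h1 (abs_nonneg _) (hρnn q)
    have t2 : ‖q.2 - z‖ * ‖v.2‖ ≤ ρ q * ‖v‖ := mul_le_mul hnrm' h2 (norm_nonneg _) (hρnn q)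
    calc _ ≤ 2 * (|q.1 - τ| * |v.1|) + 2 * (‖q.2 - z‖ * ‖v.2‖) := hb
    _ ≤ 4 * ρ q * ‖v‖ := by linarith
  have hScont : Continuous S := by
    apply Continuous.add
    · exact (continuous_fst.sub continuous_const).mul (continuous_fst.sub continuous_const)
    · exact Continuous.inner (continuous_snd.sub continuous_const)
        (continuous_snd.sub continuous_const)
  have hρcont : Continuous ρ := Real.continuous_sqrt.comp hScont
  have hDScont : Continuous DS := by
    apply Continuous.add
    · apply Continuous.add <;>
        exact ((continuous_fst.sub continuous_const).smul continuous_const)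
    · apply Continuous.clm_comp _ continuous_const
      exact (isBoundedBilinearMap_inner (𝕜 := ℝ) (E := E n)).isBoundedLinearMap_deriv.continuous.comp
        ((continuous_snd.sub continuous_const).prodMk (continuous_snd.sub continuous_const))
  set Ψ' : (ℝ × E n) → ((ℝ × E n) →L[ℝ] ℝ) := fun q =>
    L - (g' (ρ q) * (2 * Real.sqrt (S q))⁻¹) • DS q with hΨ'
  have hΨ'pt : Ψ' (τ, z) = L := by
    rw [hΨ']; simp only; rw [hρpt, hg'0, zero_mul, zero_smul, sub_zero]
  -- HasFDerivAt everywhere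
  have hψderiv : ∀ q, HasFDerivAt ψ (Ψ' q) q := by
    intro q
    by_cases hq : q = (τ, z)
    · subst hq
      rw [hΨ'pt]
      have h₁ : HasFDerivAt (fun q : ℝ × E n => L q - C) L (τ, z) := L.hasFDerivAt.sub_const C
      have h₂ : HasFDerivAt (fun q : ℝ × E n => g (ρ q)) (0 : (ℝ × E n) →L[ℝ] ℝ) (τ, z) := by
        rw [hasFDerivAt_iff_isLittleO_nhds_zero]
        rw [isLittleO_iff]
        intro c hc
        obtain ⟨δ, hδ, hδb⟩ := hsmall (c/2) (by linarith)
        rw [Metric.eventually_nhds_iff]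
        refine ⟨min (δ/2) 1, by positivity, fun h hh => ?_⟩
        rw [dist_zero_right] at hh
        have hρh : ρ ((τ, z) + h) ≤ 2 * ‖h‖ := by
          have e : S ((τ, z) + h) = h.1 * h.1 + ⟪h.2, h.2⟫ := by
            rw [hSdef]; simp
          have : ρ ((τ, z) + h) ≤ |h.1| + ‖h.2‖ := by
            rw [hρdef]; simp only; rw [e]; exact sqrt_le_abs_add _ _
          have h1 : |h.1| ≤ ‖h‖ := by have := norm_fst_le h; simpa using this
          have h2 : ‖h.2‖ ≤ ‖h‖ := norm_snd_le h
          linarith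
        have hρδ : ρ ((τ, z) + h) ≤ δ := by
          have : ‖h‖ ≤ δ/2 := by
            have := min_le_left (δ/2) 1; linarith [hh.le.trans (min_le_left (δ/2) 1)]
          linarith
        have hgb : g (ρ ((τ, z) + h)) ≤ c/2 * ρ ((τ, z) + h) :=
          hδb _ (hρnn _) hρδ
        simp only [ContinuousLinearMap.zero_apply, sub_zero]
        have : ‖g (ρ ((τ, z) + h)) - g (ρ (τ, z))‖ = g (ρ ((τ, z) + h)) := by
          rw [hρpt, hg0]
          simp [abs_of_nonneg (hgnn _)]
        rw [this]
        calc g (ρ ((τ, z) + h)) ≤ c/2 * ρ ((τ, z) + h) := hgb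
        _ ≤ c/2 * (2 * ‖h‖) := by
            apply mul_le_mul_of_nonneg_left hρh (by linarith)
        _ = c * ‖h‖ := by ring
      have := h₁.sub h₂
      rw [sub_zero] at this
      exact this
    · have hne : S q ≠ 0 := hSne q hq
      have hsqrt : HasDerivAt Real.sqrt (1/(2*Real.sqrt (S q))) (S q) :=
        Real.hasDerivAt_sqrt hne
      have hρq : HasFDerivAt ρ ((1/(2*Real.sqrt (S q))) • DS q) q :=
        hsqrt.comp_hasFDerivAt q (hS q)
      have hgρ : HasFDerivAt (fun q => g (ρ q)) (g' (ρ q) • ((1/(2*Real.sqrt (S q))) • DS q)) q :=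
        (hg (ρ q)).comp_hasFDerivAt q hρq
      have h₁ : HasFDerivAt (fun q : ℝ × E n => L q - C) L q := L.hasFDerivAt.sub_const C
      have heq : g' (ρ q) • ((1/(2*Real.sqrt (S q))) • DS q)
          = (g' (ρ q) * (2 * Real.sqrt (S q))⁻¹) • DS q := by
        rw [smul_smul, one_div]
      have := h₁.sub hgρ
      rw [heq] at this
      exact this
  -- continuity of Ψ'
  have hΨ'cont : Continuous Ψ' := by
    rw [continuous_iff_continuousAt]
    intro q₀
    by_cases hq : q₀ = (τ, z)
    · subst hq
      have hbound : ∀ q, ‖Ψ' q - L‖ ≤ 2 * |g' (ρ q)| := by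
        intro q
        have : Ψ' q - L = -((g' (ρ q) * (2 * Real.sqrt (S q))⁻¹) • DS q) := by
          rw [hΨ']; simp only; abel
        rw [this, norm_neg]
        have hns := norm_smul (α := ℝ) (β := (ℝ × E n) →L[ℝ] ℝ)
          (g' (ρ q) * (2 * Real.sqrt (S q))⁻¹) (DS q)
        rw [Real.norm_eq_abs] at hns
        rw [hns]
        have h4 := hDSnorm q
        rcases eq_or_ne (S q) 0 with h0 | h0
        · have : ρ q = 0 := by rw [hρdef]; simp only; rw [h0, Real.sqrt_zero]
          have hDS0 : ‖DS q‖ = 0 := le_antisymm (by rw [← mul_zero (4:ℝ), ← this]; exact h4)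
            (norm_nonneg _)
          rw [hDS0, mul_zero]
          positivity
        · have hpos : 0 < Real.sqrt (S q) :=
            Real.sqrt_pos.2 (lt_of_le_of_ne (hSnn q) (Ne.symm h0))
          have habs' : |g' (ρ q) * (2 * Real.sqrt (S q))⁻¹|
              = |g' (ρ q)| * (2 * Real.sqrt (S q))⁻¹ := by
            rw [abs_mul, abs_of_nonneg (by positivity : (0:ℝ) ≤ (2 * Real.sqrt (S q))⁻¹)]
          rw [habs']
          have hρeq : ρ q = Real.sqrt (S q) := rfl
          calc |g' (ρ q)| * (2 * Real.sqrt (S q))⁻¹ * ‖DS q‖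
              ≤ |g' (ρ q)| * (2 * Real.sqrt (S q))⁻¹ * (4 * Real.sqrt (S q)) := by
                apply mul_le_mul_of_nonneg_left _ (by positivity)
                rw [← hρeq]; exact h4
          _ = 2 * |g' (ρ q)| := by field_simp; ring
      have htend : Tendsto (fun q => 2 * |g' (ρ q)|) (𝓝 (τ, z)) (𝓝 0) := by
        have hc : Continuous fun q => 2 * |g' (ρ q)| :=
          continuous_const.mul ((hg'c.comp hρcont).abs)
        have := hc.tendsto (τ, z)
        rwa [hρpt, hg'0, abs_zero, mul_zero] at this
      have : Tendsto (fun q => Ψ' q - L) (𝓝 (τ, z)) (𝓝 0) :=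
        squeeze_zero_norm hbound htend
      have h2 : Tendsto Ψ' (𝓝 (τ, z)) (𝓝 L) := tendsto_sub_nhds_zero_iff.1 this
      rw [ContinuousAt, hΨ'pt]
      exact h2
    · have hne : S q₀ ≠ 0 := hSne q₀ hq
      apply ContinuousAt.sub continuousAt_const
      refine ContinuousAt.smul (f := fun q => g' (ρ q) * (2 * Real.sqrt (S q))⁻¹) ?_ hDScont.continuousAt
      apply ContinuousAt.mul (hg'c.comp hρcont).continuousAt
      apply ContinuousAt.inv₀ (continuous_const.mul (Real.continuous_sqrt.comp hScont)).continuousAt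
      have : 0 < Real.sqrt (S q₀) := Real.sqrt_pos.2 (lt_of_le_of_ne (hSnn q₀) (Ne.symm hne))
      exact mul_ne_zero two_ne_zero this.ne'
  have hψC1 : ContDiff ℝ 1 ψ := by
    rw [contDiff_one_iff_fderiv]
    refine ⟨fun q => (hψderiv q).differentiableAt, ?_⟩
    have : fderiv ℝ ψ = Ψ' := funext fun q => (hψderiv q).fderiv
    rw [this]; exact hΨ'cont
  have hLpt : HasFDerivAt ψ L (τ, z) := by
    have := hψderiv (τ, z); rwa [hΨ'pt] at this
  refine ⟨ψ, hψC1, ?_, ?_, ?_⟩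
  · have hder : HasDerivAt (fun t => ψ (t, z)) (L (1, 0)) τ :=
      hLpt.comp_hasDerivAt (l := ψ) (l' := L) τ ((hasDerivAt_id' τ).prodMk (hasDerivAt_const τ z))
    have : L ((1:ℝ), (0:E n)) = p0 := by rw [hLapp]; simp
    rw [← this]
    exact hder.deriv
  · have hinr : HasFDerivAt (fun x : E n => ((τ, x) : ℝ × E n))
        ((0 : E n →L[ℝ] ℝ).prod (ContinuousLinearMap.id ℝ (E n))) z :=
      (hasFDerivAt_const τ z).prodMk (hasFDerivAt_id z)
    have hcomp : HasFDerivAt (fun x : E n => ψ (τ, x))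
        (L.comp ((0 : E n →L[ℝ] ℝ).prod (ContinuousLinearMap.id ℝ (E n)))) z :=
      hLpt.comp z hinr
    have heq : L.comp ((0 : E n →L[ℝ] ℝ).prod (ContinuousLinearMap.id ℝ (E n)))
        = (InnerProductSpace.toDual ℝ (E n)) pv := by
      ext y
      rw [InnerProductSpace.toDual_apply_apply]
      simp [hLapp]
    rw [heq] at hcomp
    exact (hasGradientAt_iff_hasFDerivAt.2 hcomp).gradient
  · intro p
    have hψpt : ψ (τ, z) = 0 := by
      rw [hψ]; simp only
      rw [hρpt, hg0, hLapp, hC]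
      simp
    rw [hψpt, sub_zero, hψ]
    simp only
    rw [hLapp, hC]
    have : ρ p = Real.sqrt ((p.1 - τ) * (p.1 - τ) + ⟪p.2 - z, p.2 - z⟫) := rfl
    rw [this]
    have hinner : ⟪pv, p.2⟫ - ⟪pv, z⟫ = ⟪p.2 - z, pv⟫ := by
      rw [← inner_sub_right, real_inner_comm]
    ring_nf
    rw [← hinner]
    ring


lemma Oplus_mono {n : ℕ} {δ₁ δ₂ τ : ℝ} {z : E n} (h : δ₁ ≤ δ₂) :
    Oplus δ₁ τ z ⊆ Oplus δ₂ τ z := by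
  intro q hq
  exact ⟨⟨hq.1.1, hq.1.2.trans (by linarith)⟩, hq.2.trans h⟩

lemma den_pos {n : ℕ} {τ : ℝ} {z : E n} {q : ℝ × E n} (hq : q ≠ (τ, z)) :
    0 < |q.1 - τ| + ‖q.2 - z‖ := by
  by_contra hcon
  push_neg at hcon
  have h1 : |q.1 - τ| = 0 :=
    le_antisymm (by linarith [norm_nonneg (q.2 - z)]) (abs_nonneg _)
  have h2 : ‖q.2 - z‖ = 0 :=
    le_antisymm (by linarith [abs_nonneg (q.1 - τ)]) (norm_nonneg _)
  apply hq
  have e1 : q.1 = τ := by have := abs_eq_zero.1 h1; linarith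
  have e2 : q.2 = z := by
    have := norm_eq_zero.1 h2; rwa [sub_eq_zero] at this
  exact Prod.ext e1 e2

theorem sub_viscosity_property_iff_subdifferential_inequality
    (t0 ϑ h : ℝ) (hth : t0 < ϑ) (hh : 0 < h) (n : ℕ) (hn : 0 < n)
    (l m : ℕ) (U : Set (E l)) (V : Set (E m))
    (hUc : IsCompact U) (hVc : IsCompact V) (hUne : U.Nonempty) (hVne : V.Nonempty)
    (f : ℝ → E n → (ℝ → E n) → E l → E m → E n)
    (f0 : ℝ → E n → (ℝ → E n) → E l → E m → ℝ)
    (hC1 : CondC1 t0 ϑ h f f0) (hC2 : CondC2 t0 ϑ h U V f f0)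
    (hC3 : CondC3 t0 ϑ h U V f f0)
    (φ : ℝ → E n → (ℝ → E n) → ℝ) (hφ : InPhi t0 ϑ h φ) :
    (∀ τ ∈ Ico t0 ϑ, ∀ (z : E n) (w : ℝ → E n), PCh h w →
        ∀ ψ : ℝ × E n → ℝ, ContDiff ℝ 1 ψ → ∀ δ > (0 : ℝ),
          (∀ p ∈ Oplus δ τ z, φ τ z w - ψ (τ, z) ≤ φ p.1 p.2 (seg (ext0 τ z w) p.1) - ψ p) →
          deriv (fun t => ψ (t, z)) τ +
            Ham U V f f0 τ z w (gradient (fun x => ψ (τ, x)) z) ≤ 0) ↔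
    (∀ τ ∈ Ico t0 ϑ, ∀ (z : E n) (w : ℝ → E n), PCh h w →
        ∀ p ∈ Dminus φ τ z w, p.1 + Ham U V f f0 τ z w p.2 ≤ 0) := by
  obtain ⟨hφc, hφlip⟩ := hφ
  constructor
  · -- test function property → subdifferential inequality
    intro hL τ hτ z w hw p hp
    simp only [Dminus, mem_setOf_eq] at hp
    -- the constant extension has the same φ-value
    have hκeq : ∀ ξ ∈ Ico (-h) (0:ℝ), seg (ext0 τ z w) τ ξ = w ξ := by
      intro ξ hξ
      simp only [seg, ext0]
      rw [if_pos (by linarith [hξ.2] : τ + ξ < τ), add_sub_cancel_left]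
    have hκPC : PCh h (seg (ext0 τ z w) τ) := by
      obtain ⟨k, ξs, hsm, h0, hlast, hi⟩ := hw
      refine ⟨k, ξs, hsm, h0, hlast, fun i => ?_⟩
      have hsub : Ico (ξs i.castSucc) (ξs i.succ) ⊆ Ico (-h) (0:ℝ) := by
        intro t ht
        constructor
        · have h1 : ξs 0 ≤ ξs i.castSucc := hsm.monotone (Fin.zero_le _)
          rw [h0] at h1; linarith [ht.1]
        · have h1 : ξs i.succ ≤ ξs (Fin.last (k+1)) := hsm.monotone (Fin.le_last _)
          rw [hlast] at h1; linarith [ht.2]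
      constructor
      · exact (hi i).1.congr fun t ht => hκeq t (hsub ht)
      · obtain ⟨Lim, hLim⟩ := (hi i).2
        refine ⟨Lim, Filter.Tendsto.congr' ?_ hLim⟩
        have hmem : Ioo (ξs i.castSucc) (ξs i.succ) ∈ 𝓝[<] (ξs i.succ) :=
          Ioo_mem_nhdsLT_of_mem ⟨hsm (Fin.castSucc_lt_succ (i := i)), le_rfl⟩
        filter_upwards [hmem] with t ht
        exact (hκeq t (hsub ⟨ht.1.le, ht.2⟩)).symm
    have hnormInf : normInf h (seg (ext0 τ z w) τ) = normInf h w := by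
      unfold normInf
      congr 1
      exact image_congr fun ξ hξ => by rw [hκeq ξ hξ]
    have hφeq : φ τ z (seg (ext0 τ z w) τ) = φ τ z w := by
      have hz0 : (0:ℝ) ≤ ‖z‖ := norm_nonneg z
      have hmx : ‖z‖ ≤ max ‖z‖ (normInf h w) := le_max_left _ _
      have hαpos : (0:ℝ) < 1 + max ‖z‖ (normInf h w) := by linarith
      obtain ⟨lφ, hlφ, hlip⟩ := hφlip (1 + max ‖z‖ (normInf h w)) hαpos
      have hm1 : memP h (1 + max ‖z‖ (normInf h w)) z w :=
        ⟨hw, by linarith, by linarith [le_max_right ‖z‖ (normInf h w)]⟩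
      have hm2 : memP h (1 + max ‖z‖ (normInf h w)) z (seg (ext0 τ z w) τ) :=
        ⟨hκPC, by linarith, by rw [hnormInf]; linarith [le_max_right ‖z‖ (normInf h w)]⟩
      have hτ' : τ ∈ Icc t0 ϑ := ⟨hτ.1, hτ.2.le⟩
      have h0int : norm1 h (fun ξ => w ξ - seg (ext0 τ z w) τ ξ) = 0 := by
        unfold norm1
        have hae : ∀ᵐ ξ ∂(volume : Measure ℝ), ξ ∈ Set.uIoc (-h) (0:ℝ) →
            ‖w ξ - seg (ext0 τ z w) τ ξ‖ = (fun _ : ℝ => (0:ℝ)) ξ := by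
          have hsing : ∀ᵐ ξ ∂(volume : Measure ℝ), ξ ≠ (0:ℝ) := by
            rw [ae_iff]
            simpa using (measure_singleton (0:ℝ) : (volume : Measure ℝ) {(0:ℝ)} = 0)
          filter_upwards [hsing] with ξ hξ0 hξI
          have hIoc : ξ ∈ Ioc (-h) (0:ℝ) := by
            rwa [uIoc_of_le (by linarith : -h ≤ (0:ℝ))] at hξI
          have hIco : ξ ∈ Ico (-h) (0:ℝ) :=
            ⟨hIoc.1.le, lt_of_le_of_ne hIoc.2 hξ0⟩
          rw [hκeq ξ hIco, sub_self, norm_zero]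
        rw [intervalIntegral.integral_congr_ae hae, intervalIntegral.integral_zero]
      have hb := hlip τ hτ' z z w (seg (ext0 τ z w) τ) hm1 hm2
      rw [sub_self, norm_zero, h0int, add_zero, mul_zero] at hb
      have : φ τ z w - φ τ z (seg (ext0 τ z w) τ) = 0 :=
        abs_eq_zero.1 (le_antisymm hb (abs_nonneg _))
      linarith
    -- the modulus θ
    obtain ⟨δ₀, hδ₀, hQ1⟩ := hp 1 one_pos
    set Nf : ℝ × E n → ℝ := fun q =>
      φ q.1 q.2 (seg (ext0 τ z w) q.1) - φ τ z w - (q.1 - τ) * p.1 - ⟪q.2 - z, p.2⟫ with hNf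
    set dn : ℝ × E n → ℝ := fun q => |q.1 - τ| + ‖q.2 - z‖ with hdn
    set Qf : ℝ × E n → ℝ := fun q => min 1 (max 0 (-(Nf q / dn q))) with hQdef
    set θ : ℝ → ℝ := fun s =>
      sSup (insert 0 (Qf '' {q | q ∈ Oplus (min s δ₀) τ z ∧ q ≠ ((τ, z) : ℝ × E n)})) with hθdef
    have hbdd : ∀ s : ℝ, BddAbove
        (insert 0 (Qf '' {q | q ∈ Oplus (min s δ₀) τ z ∧ q ≠ ((τ, z) : ℝ × E n)})) := by
      intro s
      refine ⟨1, fun x hx => ?_⟩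
      rcases hx with rfl | ⟨q, _, rfl⟩
      · exact zero_le_one
      · exact min_le_left _ _
    have hne' : ∀ s : ℝ,
        (insert (0:ℝ) (Qf '' {q | q ∈ Oplus (min s δ₀) τ z ∧ q ≠ ((τ, z) : ℝ × E n)})).Nonempty :=
      fun s => ⟨0, mem_insert _ _⟩
    have hθnn : ∀ s, 0 ≤ θ s := fun s => le_csSup (hbdd s) (mem_insert _ _)
    have hθmono : Monotone θ := by
      intro s s' hss'
      apply csSup_le_csSup (hbdd s') (hne' s)
      apply insert_subset_insert
      apply image_mono
      intro q hq
      exact ⟨Oplus_mono (min_le_min_right δ₀ hss') hq.1, hq.2⟩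
    have hθ0 : ∀ s ≤ (0:ℝ), θ s = 0 := by
      intro s hs
      have hempty : {q | q ∈ Oplus (min s δ₀) τ z ∧ q ≠ ((τ, z) : ℝ × E n)} = ∅ := by
        ext q
        simp only [mem_setOf_eq, mem_empty_iff_false, iff_false, not_and, not_not]
        rintro ⟨⟨hq1, hq2⟩, hq3⟩
        have hmin : min s δ₀ ≤ 0 := le_trans (min_le_left _ _) hs
        have e1 : q.1 = τ := le_antisymm (by linarith) hq1
        have e2 : q.2 = z := by
          have : ‖q.2 - z‖ = 0 := le_antisymm (by linarith) (norm_nonneg _)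
          have := norm_eq_zero.1 this
          rwa [sub_eq_zero] at this
        exact Prod.ext e1 e2
      rw [hθdef]
      simp only [hempty, image_empty, LawfulSingleton.insert_empty_eq]
      exact csSup_singleton 0
    have hθtends : ∀ ε > (0:ℝ), ∃ δ' > (0:ℝ), ∀ s ≤ δ', θ s ≤ ε := by
      intro ε hε
      obtain ⟨δ₁, hδ₁, hQε⟩ := hp ε hε
      refine ⟨δ₁, hδ₁, fun s hs => ?_⟩
      apply csSup_le (hne' s)
      rintro x hx
      rcases hx with rfl | ⟨q, ⟨hqO, hqne⟩, rfl⟩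
      · exact hε.le
      · have hq' : q ∈ Oplus δ₁ τ z := Oplus_mono (le_trans (min_le_left _ _) hs) hqO
        have hQq := hQε q hq' hqne
        calc Qf q ≤ max 0 (-(Nf q / dn q)) := min_le_right _ _
        _ ≤ ε := max_le hε.le (by linarith)
    have hkey : ∀ q ∈ Oplus δ₀ τ z, q ≠ ((τ, z) : ℝ × E n) →
        -(θ (max |q.1 - τ| ‖q.2 - z‖) * dn q) ≤ Nf q := by
      intro q hqO hqne
      have hdenpos : 0 < dn q := den_pos hqne
      have hqm : q ∈ Oplus (min (max |q.1 - τ| ‖q.2 - z‖) δ₀) τ z := by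
        refine ⟨⟨hqO.1.1, ?_⟩, le_min (le_max_right _ _) hqO.2⟩
        have h1 : q.1 - τ ≤ max |q.1 - τ| ‖q.2 - z‖ :=
          le_trans (le_abs_self _) (le_max_left _ _)
        have h2 : q.1 - τ ≤ δ₀ := by linarith [hqO.1.2]
        have := le_min h1 h2
        linarith
      have hθm : Qf q ≤ θ (max |q.1 - τ| ‖q.2 - z‖) :=
        le_csSup (hbdd _) (mem_insert_of_mem _ (mem_image_of_mem _ ⟨hqm, hqne⟩))
      have hG1 : -(Nf q / dn q) ≤ 1 := by
        have := hQ1 q hqO hqne; linarith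
      have hQq : -(Nf q / dn q) ≤ Qf q := le_min hG1 (le_max_right _ _)
      have hfin : -(Nf q / dn q) ≤ θ (max |q.1 - τ| ‖q.2 - z‖) := le_trans hQq hθm
      have hmul := mul_le_mul_of_nonneg_right hfin hdenpos.le
      rw [neg_mul, div_mul_cancel₀ _ (ne_of_gt hdenpos)] at hmul
      linarith
    -- build the test function
    obtain ⟨g, g', hg, hg'c, hg0, hg'0, hgnn, hglow, hgup⟩ :=
      exists_modulus_fn θ hθmono hθnn hθ0 hθtends
    have hsmall : ∀ ε > (0:ℝ), ∃ δ' > (0:ℝ), ∀ s, 0 ≤ s → s ≤ δ' → g s ≤ ε * s := by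
      intro ε hε
      obtain ⟨δ₁, hδ₁, hb⟩ := hθtends (ε/4) (by linarith)
      refine ⟨δ₁/4, by linarith, fun s hs0 hsδ => ?_⟩
      have h1 := hgup s hs0
      have h4 : θ (4*s) ≤ ε/4 := hb _ (by linarith)
      nlinarith [hθnn (4*s)]
    obtain ⟨ψ, hψC1, hderiv, hgrad, hform⟩ :=
      exists_test_fn τ z p.1 p.2 g g' hg hg'c hg0 hg'0 hgnn hsmall
    have hHyp : ∀ q ∈ Oplus δ₀ τ z,
        φ τ z w - ψ (τ, z) ≤ φ q.1 q.2 (seg (ext0 τ z w) q.1) - ψ q := by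
      intro q hqO
      by_cases hqe : q = ((τ, z) : ℝ × E n)
      · subst hqe
        simp only
        linarith [hφeq]
      · have hformq := hform q
        have hm := hkey q hqO hqe
        have habs' : |q.1 - τ| ≤
            Real.sqrt ((q.1 - τ) * (q.1 - τ) + ⟪q.2 - z, q.2 - z⟫) := abs_le_sqrt' _ _
        have hnrm' : ‖q.2 - z‖ ≤
            Real.sqrt ((q.1 - τ) * (q.1 - τ) + ⟪q.2 - z, q.2 - z⟫) := norm_le_sqrt' _ _
        set ρq := Real.sqrt ((q.1 - τ) * (q.1 - τ) + ⟪q.2 - z, q.2 - z⟫) with hρq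
        have hρnn : 0 ≤ ρq := Real.sqrt_nonneg _
        have hθmρ : θ (max |q.1 - τ| ‖q.2 - z‖) ≤ θ ρq := hθmono (max_le habs' hnrm')
        have hden2 : dn q ≤ 2 * ρq := by
          have : dn q = |q.1 - τ| + ‖q.2 - z‖ := rfl
          rw [this]; linarith
        have hdnn : 0 ≤ dn q := by
          have : dn q = |q.1 - τ| + ‖q.2 - z‖ := rfl
          rw [this]; positivity
        have hchain : θ (max |q.1 - τ| ‖q.2 - z‖) * dn q ≤ 4 * ρq * θ ρq := by
          calc θ (max |q.1 - τ| ‖q.2 - z‖) * dn q ≤ θ ρq * (2 * ρq) :=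
              mul_le_mul hθmρ hden2 hdnn (hθnn ρq)
          _ ≤ 4 * ρq * θ ρq := by nlinarith [hθnn ρq]
        have hgb : 4 * ρq * θ ρq ≤ g ρq := hglow ρq hρnn
        have hNf : Nf q = φ q.1 q.2 (seg (ext0 τ z w) q.1) - φ τ z w
            - (q.1 - τ) * p.1 - ⟪q.2 - z, p.2⟫ := rfl
        rw [hNf] at hm
        linarith [hformq, hm, hchain, hgb]
    have hfinal := hL τ hτ z w hw ψ hψC1 δ₀ hδ₀ hHyp
    rwa [hderiv, hgrad] at hfinal
  · -- subdifferential inequality → test function property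
    intro hR τ hτ z w hw ψ hψ δ hδ hmin
    have hdiff : DifferentiableAt ℝ ψ ((τ, z) : ℝ × E n) :=
      (hψ.differentiable one_ne_zero).differentiableAt
    set L := fderiv ℝ ψ ((τ, z) : ℝ × E n) with hLdef
    have hF : HasFDerivAt ψ L ((τ, z) : ℝ × E n) := hdiff.hasFDerivAt
    have hder : HasDerivAt (fun t => ψ (t, z)) (L (1, 0)) τ :=
      hF.comp_hasDerivAt (l := ψ) (l' := L) τ ((hasDerivAt_id' τ).prodMk (hasDerivAt_const τ z))
    set a : ℝ := deriv (fun t => ψ (t, z)) τ with ha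
    have haL : a = L ((1:ℝ), (0:E n)) := by rw [ha, hder.deriv]
    set J : E n →L[ℝ] ℝ × E n :=
      (0 : E n →L[ℝ] ℝ).prod (ContinuousLinearMap.id ℝ (E n)) with hJ
    have hinr : HasFDerivAt (fun x : E n => ((τ, x) : ℝ × E n)) J z :=
      (hasFDerivAt_const τ z).prodMk (hasFDerivAt_id z)
    have hGrad : HasFDerivAt (fun x => ψ (τ, x)) (L.comp J) z := hF.comp z hinr
    set gv : E n := gradient (fun x => ψ (τ, x)) z with hgv
    have hgv_eq : gv = (InnerProductSpace.toDual ℝ (E n)).symm (L.comp J) := by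
      rw [hgv]
      exact (hasFDerivAt_iff_hasGradientAt.1 hGrad).gradient
    have hinner_gv : ∀ y : E n, ⟪y, gv⟫ = L ((0:ℝ), y) := by
      intro y
      rw [real_inner_comm, hgv_eq, InnerProductSpace.toDual_symm_apply]
      have : J y = ((0:ℝ), y) := by simp [hJ]
      rw [← this]
      rfl
    have hLdecomp : ∀ q : ℝ × E n,
        L (q - (τ, z)) = (q.1 - τ) * a + ⟪q.2 - z, gv⟫ := by
      intro q
      have hsplit : q - ((τ, z) : ℝ × E n)
          = (q.1 - τ) • (((1:ℝ), (0:E n)) : ℝ × E n) + (((0:ℝ), q.2 - z) : ℝ × E n) := by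
        apply Prod.ext <;> simp
      rw [hsplit, map_add, _root_.map_smul, smul_eq_mul, ← haL, hinner_gv (q.2 - z)]
    have hmem : ((a, gv) : ℝ × E n) ∈ Dminus φ τ z w := by
      simp only [Dminus, mem_setOf_eq]
      intro ε hε
      have hlo := isLittleO_iff.1 hF.isLittleO hε
      rw [Metric.eventually_nhds_iff] at hlo
      obtain ⟨δ₁, hδ₁, hb⟩ := hlo
      refine ⟨min δ (δ₁/2), by positivity, fun q hq hqne => ?_⟩
      have hqδ : q ∈ Oplus δ τ z := Oplus_mono (min_le_left _ _) hq
      have hdist : dist q ((τ, z) : ℝ × E n) < δ₁ := by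
        rw [Prod.dist_eq]
        have h1 : dist q.1 τ ≤ min δ (δ₁/2) := by
          rw [Real.dist_eq]
          have := hq.1
          rw [abs_of_nonneg (by linarith [this.1] : (0:ℝ) ≤ q.1 - τ)]
          linarith [this.2]
        have h2 : dist q.2 z ≤ min δ (δ₁/2) := by
          rw [dist_eq_norm]
          exact hq.2
        have := max_le h1 h2
        have hm : min δ (δ₁/2) ≤ δ₁/2 := min_le_right _ _
        calc max (dist q.1 τ) (dist q.2 z) ≤ min δ (δ₁/2) := max_le h1 h2
        _ ≤ δ₁/2 := hm
        _ < δ₁ := by linarith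
      have hbq := hb hdist
      have hden : 0 < |q.1 - τ| + ‖q.2 - z‖ := den_pos hqne
      rw [le_div_iff₀ hden]
      have hminq := hmin q hqδ
      have hnorm_le : ‖q - ((τ, z) : ℝ × E n)‖ ≤ |q.1 - τ| + ‖q.2 - z‖ := by
        rw [Prod.norm_def]
        have e1 : (q - ((τ, z) : ℝ × E n)).1 = q.1 - τ := rfl
        have e2 : (q - ((τ, z) : ℝ × E n)).2 = q.2 - z := rfl
        rw [e1, e2, Real.norm_eq_abs]
        exact max_le (by linarith [norm_nonneg (q.2 - z)])
          (by linarith [abs_nonneg (q.1 - τ)])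
      have hb' : |ψ q - ψ (τ, z) - L (q - (τ, z))| ≤ ε * ‖q - ((τ, z) : ℝ × E n)‖ := by
        have := hbq
        simpa [Real.norm_eq_abs] using this
      have hlow : -(ε * ‖q - ((τ, z) : ℝ × E n)‖) ≤ ψ q - ψ (τ, z) - L (q - (τ, z)) :=
        neg_le_of_abs_le hb'
      have hmul : ε * ‖q - ((τ, z) : ℝ × E n)‖ ≤ ε * (|q.1 - τ| + ‖q.2 - z‖) :=
        mul_le_mul_of_nonneg_left hnorm_le hε.le
      have hdec := hLdecomp q
      linarith [hminq, hlow, hmul, hdec]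
    have hfinal := hR τ hτ z w hw ((a, gv) : ℝ × E n) hmem
    simpa using hfinal


end DGPaper
end
end
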